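/- Let K be a compact Hausdorff topological group. The formula k · [t, k₁, k₂] = [t, k k₁ k⁻¹, k k₂] defines a well-defined continuous left action of K on D (the covering action); the map p: D → (ℝ/ℤ) × K, [t, k₁, k₂] ↦ ([t], k₁), is equivariant with respect to this action and the action of K on (ℝ/ℤ) × K given by k · (s, k₁) = (s, k k₁ k⁻¹); and this left action commutes with the right action [t, k₁, k₂] · k = [t, k₁, k₂ k]. -/

import Mathlib

/-- The action of `λ ∈ ℤ` on `ℝ × K × K` given by
`λ · (t, k₁, k₂) = (t + λ, k₁, k₁^λ k₂)`. -/
def zAct (K : Type*) [Group K] (n : ℤ) (x : ℝ × K × K) : ℝ × K × K :=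
  (x.1 + n, x.2.1, x.2.1 ^ n * x.2.2)

/-- The bundle `D = (ℝ × K × K)/ℤ`. -/
abbrev bundleD (K : Type*) [Group K] : Type _ :=
  Quot (fun x y : ℝ × K × K => ∃ n : ℤ, zAct K n x = y)

section Aux

variable {K : Type*} [Group K]

lemma zAct_equiv : Equivalence (fun x y : ℝ × K × K => ∃ n : ℤ, zAct K n x = y) := by
  constructor
  · intro x; exact ⟨0, by simp [zAct]⟩
  · rintro x y ⟨n, rfl⟩
    refine ⟨-n, ?_⟩
    simp only [zAct]
    refine Prod.ext ?_ (Prod.ext rfl ?_)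
    · push_cast; ring
    · simp [← mul_assoc, ← zpow_add]
  · rintro x y z ⟨n, rfl⟩ ⟨m, rfl⟩
    refine ⟨n + m, ?_⟩
    simp only [zAct]
    refine Prod.ext ?_ (Prod.ext rfl ?_)
    · push_cast; ring
    · simp [← mul_assoc, ← zpow_add, add_comm]

variable [TopologicalSpace K] [IsTopologicalGroup K]

lemma continuous_zAct (n : ℤ) : Continuous (zAct K n) := by
  unfold zAct
  fun_prop

lemma isOpenQuotientMap_mk :
    IsOpenQuotientMap (Quot.mk (fun x y : ℝ × K × K => ∃ n : ℤ, zAct K n x = y)) := by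
  refine ⟨Quot.exists_rep, continuous_quot_mk, ?_⟩
  intro U hU
  have : Quot.mk _ ⁻¹' (Quot.mk (fun x y : ℝ × K × K => ∃ n : ℤ, zAct K n x = y) '' U)
      = ⋃ n : ℤ, zAct K n ⁻¹' U := by
    ext x
    simp only [Set.mem_preimage, Set.mem_image, Set.mem_iUnion]
    constructor
    · rintro ⟨y, hy, hxy⟩
      obtain ⟨n, rfl⟩ := zAct_equiv.eqvGen_iff.mp (Quot.eqvGen_exact hxy.symm)
      exact ⟨n, hy⟩
    · rintro ⟨n, hn⟩
      exact ⟨zAct K n x, hn, (Quot.sound ⟨n, rfl⟩).symm⟩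
  rw [isOpen_coinduced, this]
  exact isOpen_iUnion fun n => (continuous_zAct n).isOpen_preimage U hU

end Aux

/-- `k · [t, k₁, k₂] = [t, k k₁ k⁻¹, k k₂]` is a well-defined continuous left action of
`K` on `D` (the covering action); the projection `p : D → (ℝ/ℤ) × K` is equivariant for
this action and conjugation on the second factor downstairs; and the left action
commutes with the right action `[t, k₁, k₂] · k = [t, k₁, k₂ k]`. -/
theorem stmt5 (K : Type*) [Group K] [TopologicalSpace K] [IsTopologicalGroup K]
    [CompactSpace K] [T2Space K] :
    ∃ lact : K → bundleD K → bundleD K,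
      (∀ (k : K) (t : ℝ) (k₁ k₂ : K),
        lact k (Quot.mk _ (t, k₁, k₂)) = Quot.mk _ (t, k * k₁ * k⁻¹, k * k₂)) ∧
      Continuous (fun z : K × bundleD K => lact z.1 z.2) ∧
      (∀ d, lact 1 d = d) ∧
      (∀ k k' d, lact (k * k') d = lact k (lact k' d)) ∧
      (∀ p : bundleD K → UnitAddCircle × K,
        (∀ (t : ℝ) (k₁ k₂ : K),
          p (Quot.mk _ (t, k₁, k₂)) = ((t : UnitAddCircle), k₁)) →
        ∀ (k : K) (d : bundleD K),
          p (lact k d) = ((p d).1, k * (p d).2 * k⁻¹)) ∧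
      (∀ ract : bundleD K → K → bundleD K,
        (∀ (t : ℝ) (k₁ k₂ k : K),
          ract (Quot.mk _ (t, k₁, k₂)) k = Quot.mk _ (t, k₁, k₂ * k)) →
        ∀ (k : K) (d : bundleD K) (k' : K),
          lact k (ract d k') = ract (lact k d) k') := by
  set r := fun x y : ℝ × K × K => ∃ n : ℤ, zAct K n x = y with hr
  have key : ∀ (k : K) (x y : ℝ × K × K), r x y →
      Quot.mk r (x.1, k * x.2.1 * k⁻¹, k * x.2.2)
        = Quot.mk r (y.1, k * y.2.1 * k⁻¹, k * y.2.2) := by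
    rintro k x y ⟨n, rfl⟩
    refine Quot.sound ⟨n, ?_⟩
    simp only [zAct]
    refine Prod.ext rfl (Prod.ext rfl ?_)
    rw [conj_zpow]
    group
  refine ⟨fun k => Quot.lift (fun x => Quot.mk r (x.1, k * x.2.1 * k⁻¹, k * x.2.2))
    (key k), fun _ _ _ _ => rfl, ?_, ?_, ?_, ?_, ?_⟩
  · -- continuity
    have hq : IsOpenQuotientMap (Prod.map (id : K → K) (Quot.mk r)) :=
      IsOpenQuotientMap.id.prodMap isOpenQuotientMap_mk
    refine hq.isQuotientMap.continuous_iff.mpr ?_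
    show Continuous fun z : K × (ℝ × K × K) =>
      Quot.mk r (z.2.1, z.1 * z.2.2.1 * z.1⁻¹, z.1 * z.2.2.2)
    exact continuous_quot_mk.comp (by fun_prop)
  · intro d
    induction d using Quot.ind with
    | _ x => simp; rfl
  · intro k k' d
    induction d using Quot.ind with
    | _ x =>
      show Quot.mk r _ = Quot.mk r _
      simp [mul_assoc]
  · intro p hp k d
    induction d using Quot.ind with
    | _ x =>
      obtain ⟨t, k₁, k₂⟩ := x
      show p (Quot.mk r (t, k * k₁ * k⁻¹, k * k₂)) = _
      rw [hp, hp]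
  · intro ract hract k d k'
    induction d using Quot.ind with
    | _ x =>
      obtain ⟨t, k₁, k₂⟩ := x
      show _ = ract (Quot.mk r (t, k * k₁ * k⁻¹, k * k₂)) k'
      rw [hract, hract]
      show Quot.mk r _ = Quot.mk r _
      simp [mul_assoc]
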